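/- Let m > 0, n ≥ 1, let c(n,P) solve c = (|P|-c)/sqrt(m²n²+(|P|-c)²) in [0,1), and set E₀⁽ⁿ⁾(P) := ½ c(n,P)² + sqrt(m²n² + (|P|-c(n,P))²). Then the derivative of E₀⁽ⁿ⁾(P) with respect to |P| equals c(n,P). -/

import Mathlib

/-- Let `c(n,·)` solve `c = (p-c)/sqrt(m²n²+(p-c)²)` in `[0,1)` as a function of
`p = |P|`, and set `E₀⁽ⁿ⁾(p) := ½ c(p)² + sqrt(m²n² + (p-c(p))²)`. Then the
derivative of `E₀⁽ⁿ⁾` with respect to `p` equals `c(p)`. -/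
theorem deriv_threshold_eq_c
    (m : ℝ) (hm : 0 < m) (n : ℕ) (hn : 1 ≤ n)
    (c : ℝ → ℝ) (p c' : ℝ) (hp : 0 ≤ p)
    (hc : ∀ q : ℝ, 0 ≤ q → c q ∈ Set.Ico (0 : ℝ) 1 ∧
      c q = (q - c q) / Real.sqrt (m ^ 2 * (n : ℝ) ^ 2 + (q - c q) ^ 2))
    (hderiv : HasDerivAt c c' p) :
    HasDerivAt
      (fun q => (c q) ^ 2 / 2 + Real.sqrt (m ^ 2 * (n : ℝ) ^ 2 + (q - c q) ^ 2))
      (c p) p := by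
  obtain ⟨hc0, hceq⟩ := hc p hp
  have hn' : (0 : ℝ) < (n : ℝ) := by exact_mod_cast hn
  set A := m ^ 2 * (n : ℝ) ^ 2 + (p - c p) ^ 2 with hA
  have hApos : 0 < A := by positivity
  have hAne : A ≠ 0 := ne_of_gt hApos
  have hSpos : 0 < Real.sqrt A := Real.sqrt_pos.mpr hApos
  have hSne : Real.sqrt A ≠ 0 := ne_of_gt hSpos
  have h1 : HasDerivAt (fun q => (c q) ^ 2 / 2) (c p * c') p := by
    have := (hderiv.pow 2).div_const 2
    exact this.congr_deriv (by push_cast; ring)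
  have h2 : HasDerivAt (fun q => m ^ 2 * (n : ℝ) ^ 2 + (q - c q) ^ 2)
      (2 * (p - c p) * (1 - c')) p := by
    have hq : HasDerivAt (fun q => q - c q) (1 - c') p := (hasDerivAt_id p).sub hderiv
    have := (hq.pow 2).const_add (m ^ 2 * (n : ℝ) ^ 2)
    exact this.congr_deriv (by push_cast; ring)
  have h3 := (Real.hasDerivAt_sqrt hAne).comp p h2
  have htot := h1.add h3
  refine htot.congr_deriv ?_
  have hcp : c p * Real.sqrt A = p - c p := by
    exact (eq_div_iff hSne).mp hceq
  field_simp
  linear_combination (c' - 1) * hcp
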